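/- arXiv:1507.06464 — 2 statements merged into one kernel-verified Lean document; each statement's English description precedes it below -/
import Mathlib

section
/- Let x_n be defined by x_0 = u_0, x_1 = u_1 + u_0/q, and x_{n+2} = u_{n+2} + x_{n+1}/q + x_n/q^2, where (u_n) is any real sequence and q ≠ 0. Then x_n = ∑_{k=0}^n (f_k / q^k) u_{n-k}, where (f_k) is the Fibonacci sequence with f_0 = f_1 = 1. -/
open scoped BigOperators

noncomputable def fibr (k : ℕ) : ℝ := Nat.fib (k + 1)

noncomputable def phi : ℝ := (1 + Real.sqrt 5) / 2

noncomputable def S (q : ℝ) (j : ℕ) : ℝ := ∑' k : ℕ, fibr (j + k) / q ^ k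

noncomputable def Q (j : ℕ) : ℝ :=
  (fibr (j + 2) + Real.sqrt ((fibr (j + 2)) ^ 2 + 8 * (fibr j) ^ 2)) / (2 * fibr j)

lemma fibr_add_two (k : ℕ) : fibr (k + 2) = fibr (k + 1) + fibr k := by
  show (Nat.fib (k + 1 + 2) : ℝ) = Nat.fib (k + 1 + 1) + Nat.fib (k + 1)
  rw [Nat.fib_add_two]; push_cast; ring

theorem closed_formula (q : ℝ) (hq : q ≠ 0) (u x : ℕ → ℝ)
    (h0 : x 0 = u 0) (h1 : x 1 = u 1 + u 0 / q)
    (hrec : ∀ n, x (n + 2) = u (n + 2) + x (n + 1) / q + x n / q ^ 2) :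
    ∀ n, x n = ∑ k ∈ Finset.range (n + 1), fibr k / q ^ k * u (n - k) := by
  intro n
  induction n using Nat.twoStepInduction with
  | zero => simp [h0, fibr]
  | one =>
    rw [h1]
    simp [Finset.sum_range_succ, fibr]
    ring
  | more n ih1 ih2 =>
    rw [hrec n, ih1, ih2]
    rw [Finset.sum_range_succ' _ (n + 2), Finset.sum_range_succ' _ (n + 1),
        Finset.sum_range_succ' _ (n + 1)]
    simp only [Nat.succ_sub_succ, Nat.add_sub_cancel, pow_zero, Nat.sub_zero]
    have key : ∑ k ∈ Finset.range (n + 1), fibr (k + 1 + 1) / q ^ (k + 1 + 1) * u (n - k)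
        = (∑ k ∈ Finset.range (n + 1), fibr (k + 1) / q ^ (k + 1) * u (n - k)) / q
          + (∑ k ∈ Finset.range (n + 1), fibr k / q ^ k * u (n - k)) / q ^ 2 := by
      rw [Finset.sum_div, Finset.sum_div, ← Finset.sum_add_distrib]
      refine Finset.sum_congr rfl fun k _ => ?_
      rw [fibr_add_two]
      field_simp
      ring
    rw [key]
    simp only [fibr, Nat.fib_one, Nat.fib_two, Nat.cast_one]
    ring
end

section
/- Let q > Q(h) for a given h ≥ 0. If (v_0,…,v_{j−1}) > (u_0,…,u_{j−1}) are binary words whose first differing index is h (i.e. v_k = u_k for k < h, v_h = 1, u_h = 0), then ∑_{k=0}^{j−1} (f_k/q^k) v_k > ∑_{k=0}^{j−1} (f_k/q^k) u_k + q^{−j} S(q,j). In particular the intervals [∑ (f_k/q^k) u_k, ∑ (f_k/q^k) u_k + q^{−j} S(q,j)] indexed by binary words of length j are pairwise disjoint, and lexicographically larger words give intervals strictly to the right. -/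
open scoped BigOperators

lemma fibr_pos (k : ℕ) : 0 < fibr k := by
  have : 0 < Nat.fib (k + 1) := Nat.fib_pos.mpr (Nat.succ_pos k)
  unfold fibr
  exact_mod_cast this

lemma fibr_mono (k : ℕ) : fibr k ≤ fibr (k + 1) := by
  have : Nat.fib (k + 1) ≤ Nat.fib (k + 2) := Nat.fib_le_fib_succ
  unfold fibr
  exact_mod_cast this

lemma fibr_succ_le (m : ℕ) : fibr (m + 1) ≤ 2 * fibr m := by
  have h2 : Nat.fib (m + 2) ≤ 2 * Nat.fib (m + 1) := by
    have := Nat.fib_add_two (n := m)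
    have h3 := Nat.fib_le_fib_succ (n := m)
    omega
  unfold fibr
  exact_mod_cast h2

lemma fibr_le_two_pow (j k : ℕ) : fibr (j + k) ≤ fibr j * 2 ^ k := by
  induction k with
  | zero => simp
  | succ n ih =>
    have h1 : fibr (j + n + 1) ≤ 2 * fibr (j + n) := fibr_succ_le (j + n)
    have : (2:ℝ) * fibr (j + n) ≤ 2 * (fibr j * 2 ^ n) := by linarith
    calc fibr (j + (n+1)) = fibr (j + n + 1) := by ring_nf
      _ ≤ 2 * (fibr j * 2 ^ n) := le_trans h1 this
      _ = fibr j * 2 ^ (n+1) := by ring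

lemma summable_aux {q : ℝ} (hq : 2 < q) (j : ℕ) :
    Summable (fun k : ℕ => fibr (j + k) / q ^ k) := by
  have hq0 : 0 < q := by linarith
  have hlt : (2 / q : ℝ) < 1 := by rw [div_lt_one hq0]; linarith
  have hge : (0:ℝ) ≤ 2 / q := by positivity
  have hgeo : Summable (fun k : ℕ => fibr j * (2 / q) ^ k) :=
    (summable_geometric_of_lt_one hge hlt).mul_left _
  refine Summable.of_nonneg_of_le (fun k => div_nonneg (fibr_pos _).le (pow_pos hq0 k).le) (fun k => ?_) hgeo
  calc fibr (j + k) / q ^ k ≤ fibr j * 2 ^ k / q ^ k :=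
        (div_le_div_iff_of_pos_right (pow_pos hq0 k)).mpr (fibr_le_two_pow j k)
    _ = fibr j * (2 / q) ^ k := by rw [div_pow]; ring

lemma S_eq {q : ℝ} (hq : 2 < q) (j : ℕ) : S q j = fibr j + S q (j + 1) / q := by
  have hq0 : (0:ℝ) < q := by linarith
  have hs := summable_aux hq j
  have h0 : S q j = fibr (j + 0) / q ^ 0 + ∑' k : ℕ, fibr (j + (k + 1)) / q ^ (k + 1) :=
    Summable.tsum_eq_zero_add hs
  have h1 : ∀ k : ℕ, fibr (j + (k + 1)) / q ^ (k + 1) = (fibr (j + 1 + k) / q ^ k) / q := by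
    intro k
    have e : j + (k + 1) = j + 1 + k := by ring
    rw [e, pow_succ, ← div_div]
  rw [h0]
  simp only [h1]
  rw [tsum_div_const]
  simp [S]

lemma S_rec {q : ℝ} (hq : 2 < q) (j : ℕ) : S q (j + 2) = S q (j + 1) + S q j := by
  have h1 : ∀ k : ℕ, fibr (j + 2 + k) / q ^ k
      = fibr (j + 1 + k) / q ^ k + fibr (j + k) / q ^ k := by
    intro k
    have : fibr (j + 2 + k) = fibr (j + 1 + k) + fibr (j + k) := by
      have := fibr_add_two (j + k)
      convert this using 2 <;> ring
    rw [this, add_div]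
  unfold S
  simp only [h1]
  exact Summable.tsum_add (summable_aux hq (j+1)) (summable_aux hq j)

lemma S_split {q : ℝ} (hq : 2 < q) (m n : ℕ) :
    S q m = (∑ k ∈ Finset.range n, fibr (m + k) / q ^ k) + S q (m + n) / q ^ n := by
  induction n with
  | zero => simp
  | succ n ih =>
    rw [ih, Finset.sum_range_succ, S_eq hq (m + n)]
    have hq0 : (0:ℝ) < q := by linarith
    have h1 : m + n + 1 = m + (n + 1) := by ring
    rw [h1]
    field_simp
    ring

lemma Q_gt_two (h : ℕ) : 2 < Q h := by
  have ha := fibr_pos h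
  set a : ℝ := fibr h with ha'
  set b : ℝ := fibr (h + 2) with hb'
  have hb2a : 2 * a ≤ b := by
    have h1 := fibr_add_two h
    have h2 := fibr_mono h
    rw [hb', h1]; linarith
  have hbpos : 0 < b := fibr_pos (h + 2)
  have hs : b < Real.sqrt (b ^ 2 + 8 * a ^ 2) := by
    have h1 : b = Real.sqrt (b ^ 2) := by rw [Real.sqrt_sq hbpos.le]
    nth_rewrite 1 [h1]
    exact Real.sqrt_lt_sqrt (by positivity) (by nlinarith)
  rw [Q, lt_div_iff₀ (by positivity)]
  nlinarith

lemma quad_pos {h : ℕ} {q : ℝ} (hq : Q h < q) :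
    0 < fibr h * q ^ 2 - fibr (h + 2) * q - 2 * fibr h := by
  have ha := fibr_pos h
  set a : ℝ := fibr h with ha'
  set b : ℝ := fibr (h + 2) with hb'
  have hbpos : 0 < b := fibr_pos (h + 2)
  have hQ : (b + Real.sqrt (b ^ 2 + 8 * a ^ 2)) / (2 * a) < q := hq
  rw [div_lt_iff₀ (by positivity)] at hQ
  have hsnn : 0 ≤ Real.sqrt (b ^ 2 + 8 * a ^ 2) := Real.sqrt_nonneg _
  have hsq : (Real.sqrt (b ^ 2 + 8 * a ^ 2)) ^ 2 = b ^ 2 + 8 * a ^ 2 :=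
    Real.sq_sqrt (by positivity)
  have hlt : Real.sqrt (b ^ 2 + 8 * a ^ 2) < q * (2 * a) - b := by linarith
  have h2 : b ^ 2 + 8 * a ^ 2 < (q * (2 * a) - b) ^ 2 := by
    rw [← hsq]
    have h0 : 0 ≤ Real.sqrt (b ^ 2 + 8 * a ^ 2) := hsnn
    nlinarith
  nlinarith

lemma key_ineq {h : ℕ} {q : ℝ} (hq : Q h < q) : S q (h + 1) < q * fibr h := by
  have h2q : 2 < q := lt_trans (Q_gt_two h) hq
  have hq0 : (0:ℝ) < q := by linarith
  have e1 : S q h = fibr h + S q (h + 1) / q := S_eq h2q h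
  have e2 : S q (h + 1) = fibr (h + 1) + S q (h + 2) / q := S_eq h2q (h + 1)
  have e3 : S q (h + 2) = S q (h + 1) + S q h := S_rec h2q h
  set X := S q (h + 1) with hX
  have eX : X * (q ^ 2 - q - 1) = fibr (h + 1) * q ^ 2 + fibr h * q := by
    rw [e3, e1] at e2
    field_simp at e2
    nlinarith [e2]
  have hpoly : 0 < q * (fibr h * q ^ 2 - fibr (h + 2) * q - 2 * fibr h) := by
    have := quad_pos hq
    positivity
  have hden : 0 < q ^ 2 - q - 1 := by nlinarith
  have hfib2 := fibr_add_two h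
  nlinarith [eX, hpoly, hden, fibr_pos h, fibr_pos (h+1)]

theorem separation_of_branches (h j : ℕ) (hhj : h < j) (q : ℝ) (hq : Q h < q)
    (u v : ℕ → ℝ) (hu : ∀ k < j, u k = 0 ∨ u k = 1) (hv : ∀ k < j, v k = 0 ∨ v k = 1)
    (hagree : ∀ k < h, v k = u k) (hvh : v h = 1) (huh : u h = 0) :
    (∑ k ∈ Finset.range j, fibr k / q ^ k * v k) >
      (∑ k ∈ Finset.range j, fibr k / q ^ k * u k) + S q j / q ^ j := by
  have h2q : 2 < q := lt_trans (Q_gt_two h) hq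
  have hq0 : (0:ℝ) < q := by linarith
  set g : ℕ → ℝ := fun k => fibr k / q ^ k * (v k - u k) with hg
  have hdiff : (∑ k ∈ Finset.range j, fibr k / q ^ k * v k)
      - (∑ k ∈ Finset.range j, fibr k / q ^ k * u k) = ∑ k ∈ Finset.range j, g k := by
    rw [← Finset.sum_sub_distrib]
    apply Finset.sum_congr rfl
    intro k _
    simp [hg]; ring
  -- split the sum
  have hsplit : ∑ k ∈ Finset.range j, g k
      = (∑ k ∈ Finset.range (h + 1), g k) + ∑ k ∈ Finset.Ico (h + 1) j, g k := by
    simp only [Finset.range_eq_Ico]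
    exact (Finset.sum_Ico_consecutive _ (Nat.zero_le _) hhj).symm
  have hfirst : ∑ k ∈ Finset.range (h + 1), g k = fibr h / q ^ h := by
    rw [Finset.sum_range_succ]
    have h0 : ∑ k ∈ Finset.range h, g k = 0 := by
      apply Finset.sum_eq_zero
      intro k hk
      rw [Finset.mem_range] at hk
      simp [hg, hagree k hk]
    rw [h0, hg]
    simp [hvh, huh]
  -- lower bound on the tail
  have htail : ∑ k ∈ Finset.Ico (h + 1) j, g k
      ≥ - ∑ k ∈ Finset.Ico (h + 1) j, fibr k / q ^ k := by
    rw [ge_iff_le, ← Finset.sum_neg_distrib]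
    apply Finset.sum_le_sum
    intro k hk
    rw [Finset.mem_Ico] at hk
    have hkj : k < j := hk.2
    have huk : 0 ≤ u k := by rcases hu k hkj with h' | h' <;> rw [h'] <;> norm_num
    have hvk0 : 0 ≤ v k := by rcases hv k hkj with h' | h' <;> rw [h'] <;> norm_num
    have huk1 : u k ≤ 1 := by rcases hu k hkj with h' | h' <;> rw [h'] <;> norm_num
    have hc : (0:ℝ) < fibr k / q ^ k := by
      have := fibr_pos k; positivity
    have hm : -1 ≤ v k - u k := by linarith
    have h2 : (fibr k / q ^ k) * (-1) ≤ (fibr k / q ^ k) * (v k - u k) :=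
      mul_le_mul_of_nonneg_left hm hc.le
    simp only [hg]
    nlinarith [h2]
  -- identify the tail sum with S
  set n := j - (h + 1) with hn
  have hjn : h + 1 + n = j := by omega
  have hT : ∑ k ∈ Finset.Ico (h + 1) j, fibr k / q ^ k
      = (∑ k ∈ Finset.range n, fibr (h + 1 + k) / q ^ k) / q ^ (h + 1) := by
    rw [Finset.sum_Ico_eq_sum_range, Finset.sum_div]
    apply Finset.sum_congr (by rw [hn])
    intro k _
    rw [pow_add, div_div, mul_comm]
  have hS := S_split h2q (h + 1) n
  rw [hjn] at hS
  have hSQ : (∑ k ∈ Finset.range n, fibr (h + 1 + k) / q ^ k)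
      = S q (h + 1) - S q j / q ^ n := by linarith
  have hqj : (q:ℝ) ^ (h + 1) * q ^ n = q ^ j := by
    rw [← pow_add, hjn]
  have hkey := key_ineq hq
  -- combine
  have hfinal : fibr h / q ^ h - (∑ k ∈ Finset.Ico (h + 1) j, fibr k / q ^ k)
      - S q j / q ^ j > 0 := by
    rw [hT, hSQ]
    have : fibr h / q ^ h - (S q (h + 1) - S q j / q ^ n) / q ^ (h + 1) - S q j / q ^ j
        = fibr h / q ^ h - S q (h + 1) / q ^ (h + 1) := by
      rw [← hqj]
      field_simp
      ring
    rw [this]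
    rw [gt_iff_lt, sub_pos, div_lt_div_iff₀ (by positivity) (by positivity)]
    calc S q (h + 1) * q ^ h < q * fibr h * q ^ h := by
          apply mul_lt_mul_of_pos_right hkey (by positivity)
      _ = fibr h * q ^ (h + 1) := by ring
  have : ∑ k ∈ Finset.range j, g k > S q j / q ^ j := by
    rw [hsplit, hfirst]
    linarith
  linarith
end
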